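/- With λ's and ν's interlacing as λ₁ > ν₁ > ⋯ > λ_p > ν_p > 0 and θ₁ defined as above, θ₁(1) < 1 + λ₂/(λ₁ − λ₂). -/

import Mathlib

open Finset

private lemma frac_lt {a b c : ℝ} (ha : 0 < a) (hab : a < b) (hbc : b < c) :
    a / (c - a) < b / (c - b) := by
  rw [div_lt_div_iff₀ (by linarith) (by linarith)]
  nlinarith

theorem theta_upper_bound (p : ℕ) [NeZero p] (hp : 2 ≤ p) (lam ν : Fin p → ℝ)
    (hln : ∀ i, ν i < lam i)
    (hint : ∀ i : Fin p, ∀ h : (i : ℕ) + 1 < p, lam ⟨(i : ℕ) + 1, h⟩ < ν i)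
    (hνpos : ∀ i, 0 < ν i) :
    1 + ∑ j ∈ univ.filter (· ≠ (0 : Fin p)),
        (lam j / (lam 0 - lam j) - ν j / (lam 0 - ν j))
      < 1 + lam ⟨1, by omega⟩ / (lam 0 - lam ⟨1, by omega⟩) := by
  have h0p : 0 < p := by omega
  have h0 : (⟨0, h0p⟩ : Fin p) = 0 := Fin.ext (by simp)
  set c := lam 0 with hc
  have hlpos : ∀ i, 0 < lam i := fun i => (hνpos i).trans (hln i)
  -- chain: all ν's below c, all lam's ≤ c (strict for index ≥ 1)
  have chain : ∀ n, ∀ h : n < p, ν ⟨n, h⟩ < c ∧ lam ⟨n, h⟩ ≤ c := by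
    intro n
    induction n with
    | zero =>
      intro h
      rw [h0]
      exact ⟨hln 0, le_refl _⟩
    | succ n ih =>
      intro h
      have hn : n < p := by omega
      have h2 : lam ⟨n + 1, h⟩ < ν ⟨n, hn⟩ := hint ⟨n, hn⟩ h
      have h3 := (ih hn).1
      exact ⟨lt_trans (hln _) (h2.trans h3), le_of_lt (h2.trans h3)⟩
  have lam_lt : ∀ n, 1 ≤ n → ∀ h : n < p, lam ⟨n, h⟩ < c := by
    intro n hn h
    obtain ⟨m, rfl⟩ : ∃ m, n = m + 1 := ⟨n - 1, by omega⟩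
    have hm : m < p := by omega
    exact (hint ⟨m, hm⟩ h).trans (chain m hm).1
  -- ℕ-indexed versions
  set G : ℕ → ℝ := fun n => if h : n < p then lam ⟨n, h⟩ / (c - lam ⟨n, h⟩) else 0 with hG
  set H : ℕ → ℝ := fun n => if h : n < p then ν ⟨n, h⟩ / (c - ν ⟨n, h⟩) else 0 with hH
  have hGle : ∀ m, 1 ≤ m → m + 1 < p → G (m + 1) ≤ H m := by
    intro m hm hmp
    have hmp' : m < p := by omega
    rw [hG, hH]
    simp only [dif_pos hmp, dif_pos hmp']
    have h1 : lam ⟨m + 1, hmp⟩ < ν ⟨m, hmp'⟩ := hint ⟨m, hmp'⟩ hmp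
    have h2 : ν ⟨m, hmp'⟩ < c := (chain m hmp').1
    exact le_of_lt (frac_lt (hlpos _) h1 h2)
  have hHpos : ∀ m, m < p → 0 < H m := by
    intro m hm
    rw [hH]
    simp only [dif_pos hm]
    exact div_pos (hνpos _) (by linarith [(chain m hm).1])
  -- rewrite the Fin sum as a ℕ sum over Ico 1 p
  have e1 : ∑ j ∈ univ.filter (· ≠ (0 : Fin p)),
        (lam j / (c - lam j) - ν j / (c - ν j))
      = ∑ j ∈ Finset.Ico 1 p, (G j - H j) := by
    rw [Finset.filter_ne' univ 0,
      Finset.sum_erase_eq_sub (Finset.mem_univ (0 : Fin p))]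
    have e3 : ∑ j : Fin p, (lam j / (c - lam j) - ν j / (c - ν j))
        = ∑ j ∈ Finset.range p, (G j - H j) := by
      rw [← Fin.sum_univ_eq_sum_range (fun j => G j - H j)]
      refine Finset.sum_congr rfl fun j _ => ?_
      rw [hG, hH]
      simp only [dif_pos j.isLt, Fin.eta]
    rw [e3, Finset.range_eq_Ico, Finset.sum_eq_sum_Ico_succ_bot h0p]
    have : G 0 - H 0 = lam 0 / (c - lam 0) - ν 0 / (c - ν 0) := by
      rw [hG, hH]
      simp only [dif_pos h0p, h0]
    rw [this]
    ring
  rw [e1]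
  -- it remains to show the telescoping bound
  have hG1 : lam ⟨1, by omega⟩ / (c - lam ⟨1, by omega⟩) = G 1 := by
    rw [hG]; simp only [dif_pos (show 1 < p by omega)]
  rw [hG1]
  have key : ∑ j ∈ Finset.Ico 1 p, G j < G 1 + ∑ j ∈ Finset.Ico 1 p, H j := by
    rw [Finset.sum_eq_sum_Ico_succ_bot (show 1 < p from hp) G]
    have hshift : ∑ j ∈ Finset.Ico 2 p, G j = ∑ i ∈ Finset.range (p - 2), G (2 + i) :=
      Finset.sum_Ico_eq_sum_range G 2 p
    have hshift2 : ∑ j ∈ Finset.Ico 1 (p - 1), H j = ∑ i ∈ Finset.range (p - 2), H (1 + i) := by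
      rw [Finset.sum_Ico_eq_sum_range]
      have e : p - 1 - 1 = p - 2 := by omega
      rw [e]
    have step1 : ∑ j ∈ Finset.Ico 2 p, G j ≤ ∑ j ∈ Finset.Ico 1 (p - 1), H j := by
      rw [hshift, hshift2]
      refine Finset.sum_le_sum fun i hi => ?_
      rw [Finset.mem_range] at hi
      have : 2 + i = (1 + i) + 1 := by ring
      rw [this]
      exact hGle (1 + i) (by omega) (by omega)
    have step2 : ∑ j ∈ Finset.Ico 1 (p - 1), H j < ∑ j ∈ Finset.Ico 1 p, H j := by
      have hpe : p - 1 + 1 = p := by omega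
      have := Finset.sum_Ico_succ_top (show 1 ≤ p - 1 by omega) H
      rw [hpe] at this
      rw [this]
      have := hHpos (p - 1) (by omega)
      linarith
    linarith
  have : ∑ j ∈ Finset.Ico 1 p, (G j - H j)
      = ∑ j ∈ Finset.Ico 1 p, G j - ∑ j ∈ Finset.Ico 1 p, H j := Finset.sum_sub_distrib G H
  rw [this]
  linarith
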